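/- arXiv:2010.09371 — 3 statements merged into one kernel-verified Lean document; each statement's English description precedes it below -/
import Mathlib

section
/- With the notation above, for φ₁, φ₁′, φ₂, φ₂′ ∈ ℝ, the great circles C_{φ₁}^{φ₁′} and C_{φ₂}^{φ₂′} are disjoint unless φ₁ ≡ φ₂ (mod π) or φ₁′ ≡ φ₂′ (mod π). If both congruences hold then the circles are equal; if only φ₁ ≡ φ₂ (mod π) holds then the intersection is exactly {p_{φ₁}, −p_{φ₁}}. -/
open Real

noncomputable section

abbrev E4 := EuclideanSpace ℝ (Fin 4)

def pt (a b c d : ℝ) : E4 := WithLp.toLp 2 ![a, b, c, d]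

def sphere3 : Set E4 := {x | ‖x‖ = 1}

def pLow (φ : ℝ) : E4 := pt (cos φ) (sin φ) 0 0

def pUp (φ' : ℝ) : E4 := pt 0 0 (cos φ') (sin φ')

/-- The great circle `C_φ^{φ′} = S³ ∩ Span{p_φ, p^{φ′}}`. -/
def Cc (φ φ' : ℝ) : Set E4 :=
  sphere3 ∩ ((Submodule.span ℝ {pLow φ, pUp φ'} : Submodule ℝ E4) : Set E4)

/-- `φ ≡ ψ (mod π)`. -/
def ModPi (φ ψ : ℝ) : Prop := ∃ n : ℤ, φ - ψ = n * π

namespace Aux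

lemma combo_apply (a b φ φ' : ℝ) :
    (a • pLow φ + b • pUp φ' : E4) = pt (a * cos φ) (a * sin φ) (b * cos φ') (b * sin φ') := by
  ext i
  fin_cases i <;>
    simp [pLow, pUp, pt, PiLp.add_apply, PiLp.smul_apply]

lemma pt_inj {a b c d a' b' c' d' : ℝ} (h : pt a b c d = pt a' b' c' d') :
    a = a' ∧ b = b' ∧ c = c' ∧ d = d' :=
  ⟨congrArg (fun v : E4 => v 0) h, congrArg (fun v : E4 => v 1) h, congrArg (fun v : E4 => v 2) h,
    congrArg (fun v : E4 => v 3) h⟩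

lemma neg_pt (a b c d : ℝ) : -pt a b c d = pt (-a) (-b) (-c) (-d) := by
  ext i; fin_cases i <;> simp [pt]

lemma norm_pt (a b c d : ℝ) : ‖pt a b c d‖ = Real.sqrt (a^2 + b^2 + c^2 + d^2) := by
  rw [EuclideanSpace.norm_eq]
  congr 1
  rw [Fin.sum_univ_four]
  simp [pt, sq_abs]

lemma norm_pLow (φ : ℝ) : ‖pLow φ‖ = 1 := by
  rw [pLow, norm_pt]
  have h := sin_sq_add_cos_sq φ
  rw [show cos φ ^ 2 + sin φ ^ 2 + 0 ^ 2 + 0 ^ 2 = 1 by nlinarith]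
  exact Real.sqrt_one

lemma sin_ne {φ ψ : ℝ} (h : ¬ ModPi φ ψ) : sin (φ - ψ) ≠ 0 := by
  intro hz
  obtain ⟨n, hn⟩ := Real.sin_eq_zero_iff.1 hz
  exact h ⟨n, hn.symm⟩

lemma key {φ ψ a b : ℝ} (h : ¬ ModPi φ ψ) (h1 : a * cos φ = b * cos ψ)
    (h2 : a * sin φ = b * sin ψ) : a = 0 ∧ b = 0 := by
  have hs := sin_ne h
  have ha : a * sin (φ - ψ) = 0 := by
    rw [Real.sin_sub]; linear_combination cos ψ * h2 - sin ψ * h1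
  have hb : b * sin (φ - ψ) = 0 := by
    rw [Real.sin_sub]; linear_combination cos φ * h2 - sin φ * h1
  exact ⟨(mul_eq_zero.1 ha).resolve_right hs, (mul_eq_zero.1 hb).resolve_right hs⟩

lemma pLow_modPi {φ ψ : ℝ} (h : ModPi φ ψ) : pLow φ = pLow ψ ∨ pLow φ = -pLow ψ := by
  obtain ⟨n, hn⟩ := h
  have hφ : φ = ψ + n * π := by linarith
  have hc : cos φ = (-1 : ℝ)^n * cos ψ := by rw [hφ, Real.cos_add_int_mul_pi]
  have hs : sin φ = (-1 : ℝ)^n * sin ψ := by rw [hφ, Real.sin_add_int_mul_pi]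
  rcases Int.even_or_odd n with he | ho
  · left
    rw [he.neg_one_zpow, one_mul] at hc hs
    rw [pLow, pLow, hc, hs]
  · right
    rw [ho.neg_one_zpow, neg_one_mul] at hc hs
    rw [pLow, pLow, hc, hs, neg_pt]
    norm_num

lemma pUp_modPi {φ ψ : ℝ} (h : ModPi φ ψ) : pUp φ = pUp ψ ∨ pUp φ = -pUp ψ := by
  obtain ⟨n, hn⟩ := h
  have hφ : φ = ψ + n * π := by linarith
  have hc : cos φ = (-1 : ℝ)^n * cos ψ := by rw [hφ, Real.cos_add_int_mul_pi]
  have hs : sin φ = (-1 : ℝ)^n * sin ψ := by rw [hφ, Real.sin_add_int_mul_pi]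
  rcases Int.even_or_odd n with he | ho
  · left
    rw [he.neg_one_zpow, one_mul] at hc hs
    rw [pUp, pUp, hc, hs]
  · right
    rw [ho.neg_one_zpow, neg_one_mul] at hc hs
    rw [pUp, pUp, hc, hs, neg_pt]
    norm_num

lemma modPi_symm {φ ψ : ℝ} (h : ModPi φ ψ) : ModPi ψ φ := by
  obtain ⟨n, hn⟩ := h
  exact ⟨-n, by push_cast; linarith⟩

lemma mem_Cc_iff {x : E4} {φ φ' : ℝ} :
    x ∈ Cc φ φ' ↔ ‖x‖ = 1 ∧ ∃ a b : ℝ, a • pLow φ + b • pUp φ' = x := by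
  simp [Cc, sphere3, Set.mem_inter_iff, SetLike.mem_coe, Submodule.mem_span_pair]

lemma pLow_mem_span {φ₁ φ₂ : ℝ} (h : ModPi φ₁ φ₂) (φ₂' : ℝ) :
    pLow φ₁ ∈ Submodule.span ℝ ({pLow φ₂, pUp φ₂'} : Set E4) := by
  rcases pLow_modPi h with he | he <;> rw [he]
  · exact Submodule.subset_span (Set.mem_insert _ _)
  · exact neg_mem (Submodule.subset_span (Set.mem_insert _ _))

lemma pUp_mem_span {φ₁' φ₂' : ℝ} (h : ModPi φ₁' φ₂') (φ₂ : ℝ) :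
    pUp φ₁' ∈ Submodule.span ℝ ({pLow φ₂, pUp φ₂'} : Set E4) := by
  rcases pUp_modPi h with he | he <;> rw [he]
  · exact Submodule.subset_span (Set.mem_insert_of_mem _ rfl)
  · exact neg_mem (Submodule.subset_span (Set.mem_insert_of_mem _ rfl))

lemma span_le_span {φ₁ φ₁' φ₂ φ₂' : ℝ} (h1 : ModPi φ₁ φ₂) (h2 : ModPi φ₁' φ₂') :
    Submodule.span ℝ ({pLow φ₁, pUp φ₁'} : Set E4) ≤
      Submodule.span ℝ ({pLow φ₂, pUp φ₂'} : Set E4) := by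
  rw [Submodule.span_le]
  rintro x (rfl | rfl)
  · exact pLow_mem_span h1 _
  · exact pUp_mem_span h2 _

end Aux

open Aux in
/-- The circles `C_{φ₁}^{φ₁′}` and `C_{φ₂}^{φ₂′}` are disjoint unless `φ₁ ≡ φ₂ (mod π)` or
`φ₁′ ≡ φ₂′ (mod π)`; if both congruences hold the circles are equal; if only the first holds
the intersection is exactly `{p_{φ₁}, −p_{φ₁}}`. -/
theorem statement5 (φ₁ φ₁' φ₂ φ₂' : ℝ) :
    (¬ ModPi φ₁ φ₂ → ¬ ModPi φ₁' φ₂' → Cc φ₁ φ₁' ∩ Cc φ₂ φ₂' = ∅) ∧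
    (ModPi φ₁ φ₂ → ModPi φ₁' φ₂' → Cc φ₁ φ₁' = Cc φ₂ φ₂') ∧
    (ModPi φ₁ φ₂ → ¬ ModPi φ₁' φ₂' →
      Cc φ₁ φ₁' ∩ Cc φ₂ φ₂' = {pLow φ₁, -pLow φ₁}) := by
  refine ⟨?_, ?_, ?_⟩
  · intro h h'
    ext x
    simp only [Set.mem_inter_iff, Set.mem_empty_iff_false, iff_false, not_and]
    intro hx1 hx2
    obtain ⟨hn, a₁, b₁, e₁⟩ := mem_Cc_iff.1 hx1
    obtain ⟨-, a₂, b₂, e₂⟩ := mem_Cc_iff.1 hx2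
    have e := e₁.trans e₂.symm
    rw [combo_apply, combo_apply] at e
    obtain ⟨q1, q2, q3, q4⟩ := pt_inj e
    obtain ⟨ha1, -⟩ := key h q1 q2
    obtain ⟨hb1, -⟩ := key h' q3 q4
    rw [← e₁, ha1, hb1] at hn
    simp at hn
  · intro h h'
    unfold Cc
    congr 1
    rw [le_antisymm (span_le_span h h') (span_le_span (modPi_symm h) (modPi_symm h'))]
  · intro h h'
    ext x
    simp only [Set.mem_inter_iff, Set.mem_insert_iff, Set.mem_singleton_iff]
    constructor
    · rintro ⟨hx1, hx2⟩
      obtain ⟨hn, a₁, b₁, e₁⟩ := mem_Cc_iff.1 hx1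
      obtain ⟨-, a₂, b₂, e₂⟩ := mem_Cc_iff.1 hx2
      have e := e₁.trans e₂.symm
      rw [combo_apply, combo_apply] at e
      obtain ⟨q1, q2, q3, q4⟩ := pt_inj e
      obtain ⟨hb1, -⟩ := key h' q3 q4
      rw [hb1, zero_smul, add_zero] at e₁
      rw [← e₁] at hn ⊢
      rw [norm_smul, norm_pLow, mul_one, Real.norm_eq_abs] at hn
      rcases abs_eq (by norm_num : (0:ℝ) ≤ 1) |>.1 hn with h1 | h1 <;> rw [h1]
      · left; rw [one_smul]
      · right; rw [neg_one_smul]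
    · have m1 : pLow φ₁ ∈ Cc φ₁ φ₁' :=
        ⟨norm_pLow φ₁, Submodule.subset_span (Set.mem_insert _ _)⟩
      have m2 : pLow φ₁ ∈ Cc φ₂ φ₂' := ⟨norm_pLow φ₁, pLow_mem_span h _⟩
      rintro (rfl | rfl)
      · exact ⟨m1, m2⟩
      · refine ⟨⟨?_, neg_mem m1.2⟩, ⟨?_, neg_mem m2.2⟩⟩ <;>
          simpa [sphere3] using norm_pLow φ₁

end
end

section
/- Let C, C^⊥, R_t be as above and let p₀ = (1,0,0,0) ∈ C. Let H = C^⊥ ⋈ p₀ be the closed hemisphere {x ∈ S³ : x₁ ≥ 0, x₂ = 0} (the union of minimizing geodesics from points of C^⊥ to p₀). Then for every p ∈ S³ the orbit {R_t p : t ∈ ℝ} intersects H in exactly one point, and when p ∉ C^⊥ this intersection is transverse (the orbit velocity at the intersection point is not tangent to H). -/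
open Real

noncomputable section

/-- The great circle `C^⊥ = {(0, 0, cos t, sin t)}`. -/
def Cperp : Set E4 := {x | ∃ t : ℝ, x = pt 0 0 (cos t) (sin t)}

/-- Rotation by angle `t` of the `(x₁,x₂)`-coordinates, fixing `(x₃,x₄)`. -/
def Rot (t : ℝ) (x : E4) : E4 :=
  pt (x 0 * cos t - x 1 * sin t) (x 0 * sin t + x 1 * cos t) (x 2) (x 3)

/-- The closed hemisphere `H = C^⊥ ⋈ p₀ = {x ∈ S³ : x₁ ≥ 0, x₂ = 0}`. -/
def Hemi : Set E4 := {x | ‖x‖ = 1 ∧ 0 ≤ x 0 ∧ x 1 = 0}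

/-- The velocity (Killing) vector of the rotation family at `x`:
`(d/dt)|₀ R_t x = (−x₂, x₁, 0, 0)`. -/
def vel (x : E4) : E4 := pt (-(x 1)) (x 0) 0 0

lemma pt_zero (a b c d : ℝ) : pt a b c d 0 = a := rfl
lemma pt_one (a b c d : ℝ) : pt a b c d 1 = b := rfl
lemma pt_two (a b c d : ℝ) : pt a b c d 2 = c := rfl
lemma pt_three (a b c d : ℝ) : pt a b c d 3 = d := rfl

lemma norm_eq4 (x : E4) : ‖x‖ = Real.sqrt ((x 0)^2 + (x 1)^2 + (x 2)^2 + (x 3)^2) := by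
  rw [EuclideanSpace.norm_eq]
  simp [Fin.sum_univ_four, sq_abs]

lemma exists_cos_sin (a b : ℝ) (h : a ^ 2 + b ^ 2 = 1) : ∃ t : ℝ, cos t = a ∧ sin t = b := by
  have hz : (⟨a, b⟩ : ℂ) ≠ 0 := by
    intro h0
    rw [Complex.ext_iff] at h0
    simp at h0
    nlinarith [h0.1, h0.2]
  have habs : ‖(⟨a, b⟩ : ℂ)‖ = 1 := by
    rw [Complex.norm_def, Complex.normSq_mk, show a * a + b * b = 1 by nlinarith]
    exact Real.sqrt_one
  exact ⟨Complex.arg ⟨a, b⟩, by rw [Complex.cos_arg hz, habs]; simp,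
    by rw [Complex.sin_arg, habs]; simp⟩

lemma ext4 (x y : E4) (h0 : x 0 = y 0) (h1 : x 1 = y 1) (h2 : x 2 = y 2) (h3 : x 3 = y 3) :
    x = y := by
  ext i
  fin_cases i <;> assumption

set_option maxHeartbeats 1000000 in
/-- Every orbit `{R_t p}` meets the closed hemisphere `H` in exactly one point; if moreover
`p ∉ C^⊥` the intersection is transverse: the orbit velocity at the intersection point is not
tangent to `H` (the hemisphere `H` lies in the hyperplane `{x₂ = 0}`, so tangency would force
the second component of the velocity to vanish). -/
theorem statement7 (p : E4) (hp : p ∈ sphere3) :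
    (∃! x : E4, x ∈ Hemi ∧ ∃ t : ℝ, Rot t p = x) ∧
    (p ∉ Cperp → ∀ x ∈ Hemi, (∃ t : ℝ, Rot t p = x) → (vel x) 1 ≠ 0) := by
  set a := p 0 with ha
  set b := p 1 with hb
  have hnorm : a ^ 2 + b ^ 2 + (p 2) ^ 2 + (p 3) ^ 2 = 1 := by
    have h1 := hp
    rw [sphere3, Set.mem_setOf_eq, norm_eq4] at h1
    exact Real.sqrt_eq_one.mp h1
  set r := Real.sqrt (a ^ 2 + b ^ 2) with hr
  have hr2 : r ^ 2 = a ^ 2 + b ^ 2 := Real.sq_sqrt (by positivity)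
  have hr0 : 0 ≤ r := Real.sqrt_nonneg _
  -- the canonical intersection point
  set x₀ : E4 := pt r 0 (p 2) (p 3) with hx₀
  have hx₀mem : x₀ ∈ Hemi := by
    refine ⟨?_, by rw [hx₀, pt_zero]; exact hr0, by rw [hx₀, pt_one]⟩
    rw [norm_eq4, hx₀, pt_zero, pt_one, pt_two, pt_three]
    rw [show r ^ 2 + 0 ^ 2 + p 2 ^ 2 + p 3 ^ 2 = 1 by rw [hr2]; linarith]
    exact Real.sqrt_one
  -- any orbit point in Hemi equals x₀
  have huniq : ∀ x : E4, (x ∈ Hemi ∧ ∃ t : ℝ, Rot t p = x) → x = x₀ := by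
    rintro x ⟨⟨-, hxpos, hx1⟩, t, hxt⟩
    have e0 : x 0 = a * cos t - b * sin t := by rw [← hxt]; rfl
    have e1 : x 1 = a * sin t + b * cos t := by rw [← hxt]; rfl
    have e2 : x 2 = p 2 := by rw [← hxt]; rfl
    have e3 : x 3 = p 3 := by rw [← hxt]; rfl
    have hsq : (x 0) ^ 2 = a ^ 2 + b ^ 2 := by
      have hcs := sin_sq_add_cos_sq t
      rw [e0]
      nlinarith [e1, hx1]
    have hx0r : x 0 = r := by
      have : (x 0) ^ 2 = r ^ 2 := by rw [hsq, hr2]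
      nlinarith
    exact ext4 x x₀ (by rw [hx0r, hx₀, pt_zero]) (by rw [hx1, hx₀, pt_one])
      (by rw [e2, hx₀, pt_two]) (by rw [e3, hx₀, pt_three])
  -- existence of t with Rot t p = x₀
  have hex : ∃ t : ℝ, Rot t p = x₀ := by
    by_cases hab : a = 0 ∧ b = 0
    · refine ⟨0, ext4 _ _ ?_ ?_ ?_ ?_⟩ <;>
        simp [Rot, pt_zero, pt_one, pt_two, pt_three, hx₀, hab.1, hab.2, ← ha, ← hb, hr,
          Real.sqrt_zero]
    · have hab2 : (0:ℝ) < a ^ 2 + b ^ 2 := by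
        rcases not_and_or.mp hab with h | h <;> positivity
      have hrpos : 0 < r := Real.sqrt_pos.mpr hab2
      obtain ⟨t, hct, hst⟩ := exists_cos_sin (a / r) (-(b / r)) (by
        have hrne : r ≠ 0 := ne_of_gt hrpos
        field_simp
        nlinarith [hr2])
      refine ⟨t, ext4 _ _ ?_ ?_ ?_ ?_⟩
      · rw [hx₀, pt_zero]
        show a * cos t - b * sin t = r
        rw [hct, hst]
        have hrne : r ≠ 0 := ne_of_gt hrpos
        field_simp
        nlinarith [hr2]
      · rw [hx₀, pt_one]
        show a * sin t + b * cos t = 0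
        rw [hct, hst]
        have hrne : r ≠ 0 := ne_of_gt hrpos
        field_simp
        ring
      · rfl
      · rfl
  refine ⟨⟨x₀, ⟨hx₀mem, hex⟩, fun y hy => huniq y hy⟩, ?_⟩
  -- transversality
  intro hpC x hxH hxt
  have hxeq := huniq x ⟨hxH, hxt⟩
  have hv : (vel x) 1 = x 0 := rfl
  rw [hv, hxeq, hx₀, pt_zero]
  intro hr0'
  apply hpC
  have hab : a ^ 2 + b ^ 2 = 0 := by rw [← hr2, hr0']; ring
  have ha0 : a = 0 := by nlinarith
  have hb0 : b = 0 := by nlinarith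
  obtain ⟨t, hct, hst⟩ := exists_cos_sin (p 2) (p 3) (by nlinarith)
  exact ⟨t, ext4 _ _ (by rw [pt_zero, ← ha, ha0]) (by rw [pt_one, ← hb, hb0])
    (by rw [pt_two, hct]) (by rw [pt_three, hst])⟩

end
end

section
/- Fix integers m, k ≥ 2. The collection Ω := {Ω_i^j : i, j ∈ ℤ}, where Ω_i^j is the spherical tetrahedron with vertices t_{i−1/2}, t_{i+1/2}, t^{j−1/2}, t^{j+1/2}, covers S³: every point of S³ lies in some Ω_i^j with 0 ≤ i < 2m and 0 ≤ j < 2k, and moreover any two distinct such tetrahedra have disjoint interiors. In particular S³ is tessellated by 4km tetrahedra. -/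
open Real

noncomputable section

def tLow (m : ℕ) (i : ℝ) : E4 := pt (cos (i * π / m)) (sin (i * π / m)) 0 0

def tUp (k : ℕ) (j : ℝ) : E4 := pt 0 0 (cos (j * π / k)) (sin (j * π / k))

/-- The vertices of the spherical tetrahedron `Ω_i^j`:
`t_{i−1/2}, t_{i+1/2}, t^{j−1/2}, t^{j+1/2}`. -/
def vertOm (m k : ℕ) (i j : ℤ) : Fin 4 → E4 :=
  ![tLow m ((i : ℝ) - 1/2), tLow m ((i : ℝ) + 1/2),
    tUp k ((j : ℝ) - 1/2), tUp k ((j : ℝ) + 1/2)]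

/-- The spherical tetrahedron `Ω_i^j`. -/
def Om (m k : ℕ) (i j : ℤ) : Set E4 :=
  {u | ‖u‖ = 1 ∧ ∃ c : Fin 4 → ℝ, (∀ a, 0 ≤ c a) ∧
    ∃ r : ℝ, 0 < r ∧ r • u = ∑ a, c a • vertOm m k i j a}

/-- The (open) interior of `Ω_i^j`: points where all four coefficients are strictly
positive. -/
def OmInt (m k : ℕ) (i j : ℤ) : Set E4 :=
  {u | ‖u‖ = 1 ∧ ∃ c : Fin 4 → ℝ, (∀ a, 0 < c a) ∧
    ∃ r : ℝ, 0 < r ∧ r • u = ∑ a, c a • vertOm m k i j a}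

/-! ### Auxiliary lemmas -/

/-- Polar coordinates for a (possibly zero) planar vector. -/
lemma polar_aux (p q : ℝ) :
    ∃ θ lam : ℝ, 0 ≤ lam ∧ -π < θ ∧ θ ≤ π ∧ p = lam * cos θ ∧ q = lam * sin θ := by
  by_cases h : p = 0 ∧ q = 0
  · exact ⟨0, 0, le_refl _, by linarith [pi_pos], pi_pos.le, by simp [h.1], by simp [h.2]⟩
  · rw [not_and_or] at h
    set z : ℂ := ⟨p, q⟩ with hz
    have hz0 : z ≠ 0 := by
      intro h0
      rcases h with h | h
      · exact h (congrArg Complex.re h0)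
      · exact h (congrArg Complex.im h0)
    have habs : ‖z‖ ≠ 0 := norm_ne_zero_iff.mpr hz0
    refine ⟨Complex.arg z, ‖z‖, (norm_pos_iff.mpr hz0).le,
      Complex.neg_pi_lt_arg z, Complex.arg_le_pi z, ?_, ?_⟩
    · rw [Complex.cos_arg hz0]; field_simp [hz]; rfl
    · rw [Complex.sin_arg]; field_simp [hz]; rfl

/-- Polar coordinates for a nonzero planar vector, with positive radius. -/
lemma polar_pos (p q : ℝ) (h : p ≠ 0 ∨ q ≠ 0) :
    ∃ lam : ℝ, 0 < lam ∧ p = lam * cos (Complex.arg ⟨p, q⟩) ∧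
      q = lam * sin (Complex.arg ⟨p, q⟩) := by
  set z : ℂ := ⟨p, q⟩ with hz
  have hz0 : z ≠ 0 := by
    intro h0
    rcases h with h | h
    · exact h (congrArg Complex.re h0)
    · exact h (congrArg Complex.im h0)
  have habs : ‖z‖ ≠ 0 := norm_ne_zero_iff.mpr hz0
  refine ⟨‖z‖, norm_pos_iff.mpr hz0, ?_, ?_⟩
  · rw [Complex.cos_arg hz0]; field_simp [hz]; rfl
  · rw [Complex.sin_arg]; field_simp [hz]; rfl

/-- The basic trigonometric combination identity. -/
lemma combo_cos (A B t : ℝ) :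
    sin (B - t) * cos A + sin (t - A) * cos B = sin (B - A) * cos t := by
  rw [sin_sub, sin_sub, sin_sub]; ring

lemma combo_sin (A B t : ℝ) :
    sin (B - t) * sin A + sin (t - A) * sin B = sin (B - A) * sin t := by
  rw [sin_sub, sin_sub, sin_sub]; ring

lemma tLow_shift (m : ℕ) (hm : (m : ℝ) ≠ 0) (a : ℝ) (n : ℤ) :
    tLow m (a + 2*m*n) = tLow m a := by
  unfold tLow
  have h : (a + 2*m*n) * π / m = a * π / m + n * (2*π) := by field_simp
  rw [h, Real.cos_add_int_mul_two_pi, Real.sin_add_int_mul_two_pi]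

lemma tUp_shift (k : ℕ) (hk : (k : ℝ) ≠ 0) (a : ℝ) (n : ℤ) :
    tUp k (a + 2*k*n) = tUp k a := by
  unfold tUp
  have h : (a + 2*k*n) * π / k = a * π / k + n * (2*π) := by field_simp
  rw [h, Real.cos_add_int_mul_two_pi, Real.sin_add_int_mul_two_pi]

lemma vertOm_shift (m k : ℕ) (hm : (m : ℝ) ≠ 0) (hk : (k : ℝ) ≠ 0) (i j n n' : ℤ) :
    vertOm m k (i + 2*m*n) (j + 2*k*n') = vertOm m k i j := by
  unfold vertOm
  have h1 : ((i + 2*(m:ℤ)*n : ℤ) : ℝ) - 1/2 = ((i:ℝ) - 1/2) + 2*m*n := by push_cast; ring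
  have h2 : ((i + 2*(m:ℤ)*n : ℤ) : ℝ) + 1/2 = ((i:ℝ) + 1/2) + 2*m*n := by push_cast; ring
  have h3 : ((j + 2*(k:ℤ)*n' : ℤ) : ℝ) - 1/2 = ((j:ℝ) - 1/2) + 2*k*n' := by push_cast; ring
  have h4 : ((j + 2*(k:ℤ)*n' : ℤ) : ℝ) + 1/2 = ((j:ℝ) + 1/2) + 2*k*n' := by push_cast; ring
  rw [h1, h2, h3, h4, tLow_shift m hm _ n, tLow_shift m hm _ n,
    tUp_shift k hk _ n', tUp_shift k hk _ n']

lemma Om_shift (m k : ℕ) (hm : (m : ℝ) ≠ 0) (hk : (k : ℝ) ≠ 0) (i j n n' : ℤ) :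
    Om m k (i + 2*m*n) (j + 2*k*n') = Om m k i j := by
  unfold Om
  rw [vertOm_shift m k hm hk i j n n']

/-- Membership in `Om` from polar data. -/
lemma mem_Om_of (m k : ℕ) (hm : 2 ≤ m) (hk : 2 ≤ k) (i j : ℤ) (x : E4) (hx : ‖x‖ = 1)
    (lam mu θ1 θ2 : ℝ) (hlam : 0 ≤ lam) (hmu : 0 ≤ mu)
    (h0 : x 0 = lam * cos θ1) (h1 : x 1 = lam * sin θ1)
    (h2 : x 2 = mu * cos θ2) (h3 : x 3 = mu * sin θ2)
    (hθ1a : ((i:ℝ) - 1/2) * π / m ≤ θ1) (hθ1b : θ1 ≤ ((i:ℝ) + 1/2) * π / m)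
    (hθ2a : ((j:ℝ) - 1/2) * π / k ≤ θ2) (hθ2b : θ2 ≤ ((j:ℝ) + 1/2) * π / k) :
    x ∈ Om m k i j := by
  have hmR : (1:ℝ) < m := by exact_mod_cast (by omega : 1 < m)
  have hkR : (1:ℝ) < k := by exact_mod_cast (by omega : 1 < k)
  have hm0 : (m:ℝ) ≠ 0 := by linarith
  have hk0 : (k:ℝ) ≠ 0 := by linarith
  have hδm : 0 < π / m := div_pos pi_pos (by linarith)
  have hδk : 0 < π / k := div_pos pi_pos (by linarith)
  have hδmπ : π / m < π := div_lt_self pi_pos hmR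
  have hδkπ : π / k < π := div_lt_self pi_pos hkR
  have hS1 : 0 < sin (π / m) := Real.sin_pos_of_pos_of_lt_pi hδm hδmπ
  have hS2 : 0 < sin (π / k) := Real.sin_pos_of_pos_of_lt_pi hδk hδkπ
  have hBA1 : ((i:ℝ) + 1/2) * π / m - ((i:ℝ) - 1/2) * π / m = π / m := by ring
  have hBA2 : ((j:ℝ) + 1/2) * π / k - ((j:ℝ) - 1/2) * π / k = π / k := by ring
  refine ⟨hx, ![lam * sin (((i:ℝ) + 1/2) * π / m - θ1) / sin (π/m),
    lam * sin (θ1 - ((i:ℝ) - 1/2) * π / m) / sin (π/m),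
    mu * sin (((j:ℝ) + 1/2) * π / k - θ2) / sin (π/k),
    mu * sin (θ2 - ((j:ℝ) - 1/2) * π / k) / sin (π/k)], ?_, 1, one_pos, ?_⟩
  · intro a
    fin_cases a
    · exact div_nonneg (mul_nonneg hlam (Real.sin_nonneg_of_nonneg_of_le_pi
        (by linarith) (by linarith))) hS1.le
    · exact div_nonneg (mul_nonneg hlam (Real.sin_nonneg_of_nonneg_of_le_pi
        (by linarith) (by linarith))) hS1.le
    · exact div_nonneg (mul_nonneg hmu (Real.sin_nonneg_of_nonneg_of_le_pi
        (by linarith) (by linarith))) hS2.le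
    · exact div_nonneg (mul_nonneg hmu (Real.sin_nonneg_of_nonneg_of_le_pi
        (by linarith) (by linarith))) hS2.le
  · rw [one_smul]
    have key1c := combo_cos (((i:ℝ) - 1/2) * π / m) (((i:ℝ) + 1/2) * π / m) θ1
    have key1s := combo_sin (((i:ℝ) - 1/2) * π / m) (((i:ℝ) + 1/2) * π / m) θ1
    have key2c := combo_cos (((j:ℝ) - 1/2) * π / k) (((j:ℝ) + 1/2) * π / k) θ2
    have key2s := combo_sin (((j:ℝ) - 1/2) * π / k) (((j:ℝ) + 1/2) * π / k) θ2
    rw [hBA1] at key1c key1s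
    rw [hBA2] at key2c key2s
    ext ℓ
    fin_cases ℓ <;>
      simp [Fin.sum_univ_four, vertOm, tLow, tUp, pt, -one_div]
    · rw [h0, div_mul_eq_mul_div, div_mul_eq_mul_div, ← add_div,
        eq_div_iff hS1.ne']
      linear_combination (-lam) * key1c
    · rw [h1, div_mul_eq_mul_div, div_mul_eq_mul_div, ← add_div,
        eq_div_iff hS1.ne']
      linear_combination (-lam) * key1s
    · rw [h2, div_mul_eq_mul_div, div_mul_eq_mul_div, ← add_div,
        eq_div_iff hS2.ne']
      linear_combination (-mu) * key2c
    · rw [h3, div_mul_eq_mul_div, div_mul_eq_mul_div, ← add_div,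
        eq_div_iff hS2.ne']
      linear_combination (-mu) * key2s

/-- Localization of an angle from sign conditions on sines. -/
lemma loc (δ s : ℝ) (hδ : 0 < δ) (h1 : 0 < sin s) (h2 : sin (s - δ) < 0) :
    ∃ n : ℤ, 0 < s - n * (2*π) ∧ s - n * (2*π) < δ := by
  have h2π : 0 < 2*π := by positivity
  set n := toIcoDiv h2π 0 s with hn
  set s' := toIcoMod h2π 0 s with hs'def
  have hmem := toIcoMod_mem_Ico h2π 0 s
  rw [Set.mem_Ico] at hmem
  have hs' : s' = s - n * (2*π) := by
    have := self_sub_toIcoMod h2π 0 s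
    have h' : s - s' = n * (2*π) := by rw [hs'def, this, zsmul_eq_mul]
    linarith
  have hsin : sin s' = sin s := by
    rw [hs', show s - (n:ℝ) * (2*π) = s + ((-n : ℤ) : ℝ) * (2*π) by push_cast; ring,
      Real.sin_add_int_mul_two_pi]
  have hs'2π : s' < 2*π := by linarith [hmem.2]
  have hs'0 : 0 ≤ s' := by linarith [hmem.1]
  have hs'pos : 0 < s' := by
    rcases eq_or_lt_of_le hs'0 with h | h
    · exfalso; rw [← h] at hsin; simp at hsin; linarith
    · exact h
  have hs'π : s' < π := by
    by_contra hcon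
    push_neg at hcon
    have h1' : 0 ≤ sin (s' - π) :=
      Real.sin_nonneg_of_nonneg_of_le_pi (by linarith) (by linarith)
    rw [Real.sin_sub_pi] at h1'
    linarith [hsin ▸ h1]
  have hs'δ : s' < δ := by
    by_contra hcon
    push_neg at hcon
    have h1' : 0 ≤ sin (s' - δ) :=
      Real.sin_nonneg_of_nonneg_of_le_pi (by linarith) (by linarith)
    have : sin (s' - δ) = sin (s - δ) := by
      rw [hs', show s - (n:ℝ) * (2*π) - δ = (s - δ) + ((-n : ℤ) : ℝ) * (2*π) by push_cast; ring,
        Real.sin_add_int_mul_two_pi]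
    linarith [this ▸ h1']
  exact ⟨n, by linarith [hs' ▸ hs'pos], by linarith [hs' ▸ hs'δ]⟩

/-- Two indices giving the same strictly interior angle must agree. -/
lemma index_eq (N : ℕ) (hN : 2 ≤ N) (i i' : ℤ) (hi1 : 0 ≤ i) (hi2 : i < 2*N)
    (hi1' : 0 ≤ i') (hi2' : i' < 2*N) (θ : ℝ)
    (h1 : 0 < sin (θ - ((i:ℝ) - 1/2) * π / N)) (h2 : sin (θ - ((i:ℝ) + 1/2) * π / N) < 0)
    (h1' : 0 < sin (θ - ((i':ℝ) - 1/2) * π / N)) (h2' : sin (θ - ((i':ℝ) + 1/2) * π / N) < 0) :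
    i = i' := by
  have hNR : (0:ℝ) < N := by exact_mod_cast (by omega : 0 < N)
  have hδ : 0 < π / N := div_pos pi_pos hNR
  have e : θ - ((i:ℝ) + 1/2) * π / N = (θ - ((i:ℝ) - 1/2) * π / N) - π / N := by ring
  have e' : θ - ((i':ℝ) + 1/2) * π / N = (θ - ((i':ℝ) - 1/2) * π / N) - π / N := by ring
  obtain ⟨n, hn1, hn2⟩ := loc (π/N) _ hδ h1 (by rw [← e]; exact h2)
  obtain ⟨n', hn1', hn2'⟩ := loc (π/N) _ hδ h1' (by rw [← e']; exact h2')
  -- the difference of the two localized quantities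
  have h2pi : 2*π = (2*(N:ℝ)) * (π / N) := by field_simp
  set D : ℤ := (i' - i) + 2*N*(n' - n) with hD
  have hDval : (θ - ((i:ℝ) - 1/2) * π / N - n * (2*π))
      - (θ - ((i':ℝ) - 1/2) * π / N - n' * (2*π)) = (D:ℝ) * (π / N) := by
    rw [hD]
    push_cast
    rw [h2pi]
    ring
  have hDb1 : (D:ℝ) * (π / N) < π / N := by rw [← hDval]; linarith
  have hDb2 : -(π / N) < (D:ℝ) * (π / N) := by rw [← hDval]; linarith
  have habs0 : |(D:ℝ) * (π / N)| < π / N := abs_lt.mpr ⟨hDb2, hDb1⟩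
  have habs : |(D:ℝ)| * (π / N) < 1 * (π / N) := by
    rw [one_mul]
    rwa [abs_mul, abs_of_pos hδ] at habs0
  have habs' : |(D:ℝ)| < 1 := lt_of_mul_lt_mul_right habs hδ.le
  have hD0 : D = 0 := by
    have hr := abs_lt.mp habs'
    have hlt1 : (-1 : ℤ) < D := by exact_mod_cast (by push_cast; linarith [hr.1] : ((-1:ℤ):ℝ) < (D:ℝ))
    have hlt2 : D < (1 : ℤ) := by exact_mod_cast (by push_cast; linarith [hr.2] : ((D:ℝ)) < ((1:ℤ):ℝ))
    omega
  -- now i' - i = 2*N*(n - n')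
  have hii' : i' - i = 2*(N:ℤ)*(n - n') := by
    have : (i' - i) + 2*(N:ℤ)*(n' - n) = 0 := hD0
    linarith [this]
  have hNZ : (0:ℤ) < 2*(N:ℤ) := by positivity
  have he : n - n' = 0 := by
    by_contra he
    rcases lt_or_gt_of_ne he with h | h
    · have h' : 2*(N:ℤ)*(n - n') ≤ 2*(N:ℤ)*(-1) :=
        mul_le_mul_of_nonneg_left (by omega) (by positivity)
      linarith
    · have h' : 2*(N:ℤ)*1 ≤ 2*(N:ℤ)*(n - n') :=
        mul_le_mul_of_nonneg_left (by omega) (by positivity)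
      linarith
  rw [he, mul_zero] at hii'
  omega

lemma pos_factor {r x : ℝ} (hr : 0 < r) (h : 0 < r * x) : 0 < x := by
  by_contra hx
  push_neg at hx
  nlinarith

/-- From interior membership, sign conditions on the "low" angle. -/
lemma OmInt_low (m k : ℕ) (hm : 2 ≤ m) (i j : ℤ) (u : E4) (hu : u ∈ OmInt m k i j) :
    0 < sin (Complex.arg ⟨u 0, u 1⟩ - ((i:ℝ) - 1/2) * π / m) ∧
    sin (Complex.arg ⟨u 0, u 1⟩ - ((i:ℝ) + 1/2) * π / m) < 0 := by
  obtain ⟨-, c, hc, r, hr, heq⟩ := hu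
  have hmR : (1:ℝ) < m := by exact_mod_cast (by omega : 1 < m)
  have hδm : 0 < π / m := div_pos pi_pos (by linarith)
  have hδmπ : π / m < π := div_lt_self pi_pos hmR
  have hS1 : 0 < sin (π / m) := Real.sin_pos_of_pos_of_lt_pi hδm hδmπ
  have e0 : r * u 0 = c 0 * cos (((i:ℝ) - 1/2) * π / m) + c 1 * cos (((i:ℝ) + 1/2) * π / m) := by
    have := congrFun (congrArg WithLp.ofLp heq) (0 : Fin 4)
    simpa [Fin.sum_univ_four, vertOm, tLow, tUp, pt, -one_div] using this
  have e1 : r * u 1 = c 0 * sin (((i:ℝ) - 1/2) * π / m) + c 1 * sin (((i:ℝ) + 1/2) * π / m) := by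
    have := congrFun (congrArg WithLp.ofLp heq) (1 : Fin 4)
    simpa [Fin.sum_univ_four, vertOm, tLow, tUp, pt, -one_div] using this
  have hsinBA : sin (((i:ℝ) + 1/2) * π / m - ((i:ℝ) - 1/2) * π / m) = sin (π / m) := by
    rw [show ((i:ℝ) + 1/2) * π / m - ((i:ℝ) - 1/2) * π / m = π / m by ring]
  have cross1 : cos (((i:ℝ) - 1/2) * π / m) * (r * u 1)
      - sin (((i:ℝ) - 1/2) * π / m) * (r * u 0) = c 1 * sin (π / m) := by
    rw [e0, e1, ← hsinBA, sin_sub]; ring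
  have cross2 : sin (((i:ℝ) + 1/2) * π / m) * (r * u 0)
      - cos (((i:ℝ) + 1/2) * π / m) * (r * u 1) = c 0 * sin (π / m) := by
    rw [e0, e1, ← hsinBA, sin_sub]; ring
  have hcr1 : 0 < cos (((i:ℝ) - 1/2) * π / m) * u 1 - sin (((i:ℝ) - 1/2) * π / m) * u 0 := by
    refine pos_factor hr ?_
    rw [show r * (cos (((i:ℝ) - 1/2) * π / m) * u 1 - sin (((i:ℝ) - 1/2) * π / m) * u 0)
      = cos (((i:ℝ) - 1/2) * π / m) * (r * u 1) - sin (((i:ℝ) - 1/2) * π / m) * (r * u 0) by ring,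
      cross1]
    exact mul_pos (hc 1) hS1
  have hcr2 : 0 < sin (((i:ℝ) + 1/2) * π / m) * u 0 - cos (((i:ℝ) + 1/2) * π / m) * u 1 := by
    refine pos_factor hr ?_
    rw [show r * (sin (((i:ℝ) + 1/2) * π / m) * u 0 - cos (((i:ℝ) + 1/2) * π / m) * u 1)
      = sin (((i:ℝ) + 1/2) * π / m) * (r * u 0) - cos (((i:ℝ) + 1/2) * π / m) * (r * u 1) by ring,
      cross2]
    exact mul_pos (hc 0) hS1
  have hne : u 0 ≠ 0 ∨ u 1 ≠ 0 := by
    by_contra h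
    push_neg at h
    rw [h.1, h.2] at hcr1
    simp at hcr1
  obtain ⟨lam, hlam, hu0, hu1⟩ := polar_pos (u 0) (u 1) hne
  constructor
  · refine pos_factor hlam ?_
    rw [show lam * sin (Complex.arg ⟨u 0, u 1⟩ - ((i:ℝ) - 1/2) * π / m)
      = cos (((i:ℝ) - 1/2) * π / m) * (lam * sin (Complex.arg ⟨u 0, u 1⟩))
        - sin (((i:ℝ) - 1/2) * π / m) * (lam * cos (Complex.arg ⟨u 0, u 1⟩)) by
        rw [sin_sub]; ring, ← hu0, ← hu1]
    exact hcr1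
  · have : 0 < lam * -sin (Complex.arg ⟨u 0, u 1⟩ - ((i:ℝ) + 1/2) * π / m) := by
      rw [show lam * -sin (Complex.arg ⟨u 0, u 1⟩ - ((i:ℝ) + 1/2) * π / m)
        = sin (((i:ℝ) + 1/2) * π / m) * (lam * cos (Complex.arg ⟨u 0, u 1⟩))
          - cos (((i:ℝ) + 1/2) * π / m) * (lam * sin (Complex.arg ⟨u 0, u 1⟩)) by
          rw [sin_sub]; ring, ← hu0, ← hu1]
      exact hcr2
    have := pos_factor hlam this
    linarith

lemma OmInt_up (m k : ℕ) (hk : 2 ≤ k) (i j : ℤ) (u : E4) (hu : u ∈ OmInt m k i j) :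
    0 < sin (Complex.arg ⟨u 2, u 3⟩ - ((j:ℝ) - 1/2) * π / k) ∧
    sin (Complex.arg ⟨u 2, u 3⟩ - ((j:ℝ) + 1/2) * π / k) < 0 := by
  obtain ⟨-, c, hc, r, hr, heq⟩ := hu
  have hkR : (1:ℝ) < k := by exact_mod_cast (by omega : 1 < k)
  have hδk : 0 < π / k := div_pos pi_pos (by linarith)
  have hδkπ : π / k < π := div_lt_self pi_pos hkR
  have hS2 : 0 < sin (π / k) := Real.sin_pos_of_pos_of_lt_pi hδk hδkπ
  have e0 : r * u 2 = c 2 * cos (((j:ℝ) - 1/2) * π / k) + c 3 * cos (((j:ℝ) + 1/2) * π / k) := by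
    have := congrFun (congrArg WithLp.ofLp heq) (2 : Fin 4)
    simpa [Fin.sum_univ_four, vertOm, tLow, tUp, pt, -one_div] using this
  have e1 : r * u 3 = c 2 * sin (((j:ℝ) - 1/2) * π / k) + c 3 * sin (((j:ℝ) + 1/2) * π / k) := by
    have := congrFun (congrArg WithLp.ofLp heq) (3 : Fin 4)
    simpa [Fin.sum_univ_four, vertOm, tLow, tUp, pt, -one_div] using this
  have hsinBA : sin (((j:ℝ) + 1/2) * π / k - ((j:ℝ) - 1/2) * π / k) = sin (π / k) := by
    rw [show ((j:ℝ) + 1/2) * π / k - ((j:ℝ) - 1/2) * π / k = π / k by ring]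
  have cross1 : cos (((j:ℝ) - 1/2) * π / k) * (r * u 3)
      - sin (((j:ℝ) - 1/2) * π / k) * (r * u 2) = c 3 * sin (π / k) := by
    rw [e0, e1, ← hsinBA, sin_sub]; ring
  have cross2 : sin (((j:ℝ) + 1/2) * π / k) * (r * u 2)
      - cos (((j:ℝ) + 1/2) * π / k) * (r * u 3) = c 2 * sin (π / k) := by
    rw [e0, e1, ← hsinBA, sin_sub]; ring
  have hcr1 : 0 < cos (((j:ℝ) - 1/2) * π / k) * u 3 - sin (((j:ℝ) - 1/2) * π / k) * u 2 := by
    refine pos_factor hr ?_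
    rw [show r * (cos (((j:ℝ) - 1/2) * π / k) * u 3 - sin (((j:ℝ) - 1/2) * π / k) * u 2)
      = cos (((j:ℝ) - 1/2) * π / k) * (r * u 3) - sin (((j:ℝ) - 1/2) * π / k) * (r * u 2) by ring,
      cross1]
    exact mul_pos (hc 3) hS2
  have hcr2 : 0 < sin (((j:ℝ) + 1/2) * π / k) * u 2 - cos (((j:ℝ) + 1/2) * π / k) * u 3 := by
    refine pos_factor hr ?_
    rw [show r * (sin (((j:ℝ) + 1/2) * π / k) * u 2 - cos (((j:ℝ) + 1/2) * π / k) * u 3)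
      = sin (((j:ℝ) + 1/2) * π / k) * (r * u 2) - cos (((j:ℝ) + 1/2) * π / k) * (r * u 3) by ring,
      cross2]
    exact mul_pos (hc 2) hS2
  have hne : u 2 ≠ 0 ∨ u 3 ≠ 0 := by
    by_contra h
    push_neg at h
    rw [h.1, h.2] at hcr1
    simp at hcr1
  obtain ⟨lam, hlam, hu2, hu3⟩ := polar_pos (u 2) (u 3) hne
  constructor
  · refine pos_factor hlam ?_
    rw [show lam * sin (Complex.arg ⟨u 2, u 3⟩ - ((j:ℝ) - 1/2) * π / k)
      = cos (((j:ℝ) - 1/2) * π / k) * (lam * sin (Complex.arg ⟨u 2, u 3⟩))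
        - sin (((j:ℝ) - 1/2) * π / k) * (lam * cos (Complex.arg ⟨u 2, u 3⟩)) by
        rw [sin_sub]; ring, ← hu2, ← hu3]
    exact hcr1
  · have : 0 < lam * -sin (Complex.arg ⟨u 2, u 3⟩ - ((j:ℝ) + 1/2) * π / k) := by
      rw [show lam * -sin (Complex.arg ⟨u 2, u 3⟩ - ((j:ℝ) + 1/2) * π / k)
        = sin (((j:ℝ) + 1/2) * π / k) * (lam * cos (Complex.arg ⟨u 2, u 3⟩))
          - cos (((j:ℝ) + 1/2) * π / k) * (lam * sin (Complex.arg ⟨u 2, u 3⟩)) by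
          rw [sin_sub]; ring, ← hu2, ← hu3]
      exact hcr2
    have := pos_factor hlam this
    linarith

/-- The `4km` tetrahedra `Ω_i^j`, `0 ≤ i < 2m`, `0 ≤ j < 2k`, tessellate `S³`: they cover
`S³` and distinct ones have disjoint interiors. -/
theorem statement13 (m k : ℕ) (hm : 2 ≤ m) (hk : 2 ≤ k) :
    (∀ x ∈ sphere3, ∃ i j : ℤ, 0 ≤ i ∧ i < 2 * m ∧ 0 ≤ j ∧ j < 2 * k ∧ x ∈ Om m k i j) ∧
    (∀ i j i' j' : ℤ, 0 ≤ i → i < 2 * m → 0 ≤ j → j < 2 * k →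
      0 ≤ i' → i' < 2 * m → 0 ≤ j' → j' < 2 * k → (i, j) ≠ (i', j') →
      OmInt m k i j ∩ OmInt m k i' j' = ∅) := by
  constructor
  · intro x hx
    have hxs : ‖x‖ = 1 := hx
    have hmR : (0:ℝ) < m := by exact_mod_cast (by omega : 0 < m)
    have hkR : (0:ℝ) < k := by exact_mod_cast (by omega : 0 < k)
    have hm0 : (m:ℝ) ≠ 0 := ne_of_gt hmR
    have hk0 : (k:ℝ) ≠ 0 := ne_of_gt hkR
    have hπ := pi_pos
    obtain ⟨θ1, lam, hlam, hθ1l, hθ1r, h0, h1⟩ := polar_aux (x 0) (x 1)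
    obtain ⟨θ2, mu, hmu, hθ2l, hθ2r, h2, h3⟩ := polar_aux (x 2) (x 3)
    set i₀ : ℤ := ⌊θ1 * m / π + 1/2⌋ with hi₀def
    set j₀ : ℤ := ⌊θ2 * k / π + 1/2⌋ with hj₀def
    have f1 : (i₀ : ℝ) ≤ θ1 * m / π + 1/2 := Int.floor_le _
    have f2 : θ1 * m / π + 1/2 < i₀ + 1 := Int.lt_floor_add_one _
    have g1 : (j₀ : ℝ) ≤ θ2 * k / π + 1/2 := Int.floor_le _
    have g2 : θ2 * k / π + 1/2 < j₀ + 1 := Int.lt_floor_add_one _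
    have hTm : θ1 * m / π * (π / m) = θ1 := by field_simp
    have hTk : θ2 * k / π * (π / k) = θ2 := by field_simp
    have hA : ((i₀:ℝ) - 1/2) * π / m ≤ θ1 := by
      calc ((i₀:ℝ) - 1/2) * π / m = ((i₀:ℝ) - 1/2) * (π/m) := by ring
        _ ≤ (θ1 * m / π) * (π/m) :=
            mul_le_mul_of_nonneg_right (by linarith) (le_of_lt (div_pos hπ hmR))
        _ = θ1 := hTm
    have hB : θ1 ≤ ((i₀:ℝ) + 1/2) * π / m := by
      calc θ1 = (θ1 * m / π) * (π/m) := hTm.symm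
        _ ≤ ((i₀:ℝ) + 1/2) * (π/m) :=
            mul_le_mul_of_nonneg_right (by linarith) (le_of_lt (div_pos hπ hmR))
        _ = ((i₀:ℝ) + 1/2) * π / m := by ring
    have hA' : ((j₀:ℝ) - 1/2) * π / k ≤ θ2 := by
      calc ((j₀:ℝ) - 1/2) * π / k = ((j₀:ℝ) - 1/2) * (π/k) := by ring
        _ ≤ (θ2 * k / π) * (π/k) :=
            mul_le_mul_of_nonneg_right (by linarith) (le_of_lt (div_pos hπ hkR))
        _ = θ2 := hTk
    have hB' : θ2 ≤ ((j₀:ℝ) + 1/2) * π / k := by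
      calc θ2 = (θ2 * k / π) * (π/k) := hTk.symm
        _ ≤ ((j₀:ℝ) + 1/2) * (π/k) :=
            mul_le_mul_of_nonneg_right (by linarith) (le_of_lt (div_pos hπ hkR))
        _ = ((j₀:ℝ) + 1/2) * π / k := by ring
    have hmem : x ∈ Om m k i₀ j₀ :=
      mem_Om_of m k hm hk i₀ j₀ x hxs lam mu θ1 θ2 hlam hmu h0 h1 h2 h3 hA hB hA' hB'
    have h2m : (0:ℤ) < 2 * (m:ℤ) := by positivity
    have h2k : (0:ℤ) < 2 * (k:ℤ) := by positivity
    refine ⟨i₀ % (2*(m:ℤ)), j₀ % (2*(k:ℤ)), Int.emod_nonneg _ (ne_of_gt h2m),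
      Int.emod_lt_of_pos _ h2m, Int.emod_nonneg _ (ne_of_gt h2k),
      Int.emod_lt_of_pos _ h2k, ?_⟩
    have hieq : i₀ = i₀ % (2*(m:ℤ)) + 2*(m:ℤ)*(i₀ / (2*(m:ℤ))) := by
      have := Int.emod_add_mul_ediv i₀ (2*(m:ℤ)); linarith
    have hjeq : j₀ = j₀ % (2*(k:ℤ)) + 2*(k:ℤ)*(j₀ / (2*(k:ℤ))) := by
      have := Int.emod_add_mul_ediv j₀ (2*(k:ℤ)); linarith
    have hset : Om m k i₀ j₀ = Om m k (i₀ % (2*(m:ℤ))) (j₀ % (2*(k:ℤ))) := by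
      conv_lhs => rw [hieq, hjeq]
      exact Om_shift m k hm0 hk0 _ _ _ _
    exact hset ▸ hmem
  · intro i j i' j' hi1 hi2 hj1 hj2 hi1' hi2' hj1' hj2' hne
    rw [Set.eq_empty_iff_forall_notMem]
    rintro u ⟨hu, hu'⟩
    obtain ⟨hl1, hl2⟩ := OmInt_low m k hm i j u hu
    obtain ⟨hl1', hl2'⟩ := OmInt_low m k hm i' j' u hu'
    obtain ⟨hp1, hp2⟩ := OmInt_up m k hk i j u hu
    obtain ⟨hp1', hp2'⟩ := OmInt_up m k hk i' j' u hu'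
    have hii : i = i' := index_eq m hm i i' hi1 hi2 hi1' hi2' _ hl1 hl2 hl1' hl2'
    have hjj : j = j' := index_eq k hk j j' hj1 hj2 hj1' hj2' _ hp1 hp2 hp1' hp2'
    exact hne (by rw [hii, hjj])

end
end
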